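/- Let Y = ΦX + E, where Φ ∈ ℂ^{M×N} has ΦΦ* invertible, X ∈ ℂ^{N×L} is s row-sparse with S = supp(X), and E ∈ ℂ^{M×L}. Let W̃ ∈ ℂ^{N×L} be s̃ row-sparse and set X̃ = W̃ + Φ*(ΦΦ*)⁻¹(Y − ΦW̃). Suppose X̃ = QR where Q ∈ ℂ^{N×L} has orthonormal columns and R ∈ ℂ^{L×L} is invertible with σ_max(R) ≤ α·σ_min(R) for some α ≥ 1. Let T ⊆ {1,…,N} with |T| = t ≥ s be such that ‖Q_{i·}‖₂ ≥ ‖Q_{j·}‖₂ for all i ∈ T, j ∉ T. Let γ ≥ 0 be a preconditioned restricted isometry constant of order s + s̃ + t for Φ, and θ ≥ 0 an upper restricted isometry constant of order t + s for (ΦΦ*)⁻¹Φ. Then ‖X_(T^c)‖_F ≤ √2 · α · (γ·‖X − W̃‖_F + √(1+θ)·‖E‖_F). -/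

import Mathlib

open Matrix BigOperators

/-- Frobenius norm of a complex matrix. -/
noncomputable def frobNorm {m n : Type*} [Fintype m] [Fintype n] (A : Matrix m n ℂ) : ℝ :=
  Real.sqrt (∑ i, ∑ j, ‖A i j‖ ^ 2)

open scoped Classical in
/-- The row support of a matrix: indices of its nonzero rows. -/
noncomputable def rowSupp {N L : ℕ} (X : Matrix (Fin N) (Fin L) ℂ) : Finset (Fin N) :=
  Finset.univ.filter (fun i => X i ≠ 0)

/-- `X_(T)`: the matrix obtained from `X` by zeroing every row with index outside `T`. -/
def rowRestrict {N L : ℕ} (T : Finset (Fin N)) (X : Matrix (Fin N) (Fin L) ℂ) :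
    Matrix (Fin N) (Fin L) ℂ :=
  fun i j => if i ∈ T then X i j else 0

/-- Euclidean norm of a complex vector. -/
noncomputable def vecNorm {ι : Type*} [Fintype ι] (v : ι → ℂ) : ℝ :=
  Real.sqrt (∑ i, ‖v i‖ ^ 2)

/-- `Φ_T`: the submatrix of columns of `Φ` indexed by `T`. -/
def colSub {M N : ℕ} (Φ : Matrix (Fin M) (Fin N) ℂ) (T : Finset (Fin N)) :
    Matrix (Fin M) {x // x ∈ T} ℂ :=
  fun i j => Φ i j.val

/-- `X_{(T)}`: the submatrix of rows of `X` indexed by `T`. -/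
def rowSub {N L : ℕ} (T : Finset (Fin N)) (X : Matrix (Fin N) (Fin L) ℂ) :
    Matrix {x // x ∈ T} (Fin L) ℂ :=
  fun i j => X i.val j

/-- The set of values `‖R v‖` over unit vectors `v` (the "singular value range"). -/
noncomputable def sigmaSet {L : ℕ} (R : Matrix (Fin L) (Fin L) ℂ) : Set ℝ :=
  {c | ∃ v : Fin L → ℂ, vecNorm v = 1 ∧ c = vecNorm (R.mulVec v)}

/-- The largest singular value of `R`. -/
noncomputable def sigmaMax {L : ℕ} (R : Matrix (Fin L) (Fin L) ℂ) : ℝ :=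
  sSup (sigmaSet R)

/-- The smallest singular value of `R` (for invertible `R`). -/
noncomputable def sigmaMin {L : ℕ} (R : Matrix (Fin L) (Fin L) ℂ) : ℝ :=
  sInf (sigmaSet R)

/-- Spectral (operator) norm of a square complex matrix. -/
noncomputable def specNorm {ι : Type*} [Fintype ι] (A : Matrix ι ι ℂ) : ℝ :=
  sSup {c | ∃ v : ι → ℂ, vecNorm v = 1 ∧ c = vecNorm (A.mulVec v)}

/-- `δ` is a restricted isometry constant (RIC) of order `t` for `A`, relative to matrices with
`L` columns: `(1-δ)‖Z‖_F² ≤ ‖AZ‖_F² ≤ (1+δ)‖Z‖_F²` for every `t` row-sparse `Z`. -/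
def IsRIC {M N : ℕ} (L : ℕ) (A : Matrix (Fin M) (Fin N) ℂ) (t : ℕ) (δ : ℝ) : Prop :=
  ∀ Z : Matrix (Fin N) (Fin L) ℂ, (rowSupp Z).card ≤ t →
    (1 - δ) * frobNorm Z ^ 2 ≤ frobNorm (A * Z) ^ 2 ∧
      frobNorm (A * Z) ^ 2 ≤ (1 + δ) * frobNorm Z ^ 2

/-- `γ` is a preconditioned restricted isometry constant (P-RIC) of order `t` for `Φ`:
`(1-γ)‖Z‖_F² ≤ Re tr((ΦZ)* (ΦΦ*)⁻¹ (ΦZ))` for every `t` row-sparse `Z`. -/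
def IsPRIC {M N : ℕ} (L : ℕ) (Φ : Matrix (Fin M) (Fin N) ℂ) (t : ℕ) (γ : ℝ) : Prop :=
  ∀ Z : Matrix (Fin N) (Fin L) ℂ, (rowSupp Z).card ≤ t →
    (1 - γ) * frobNorm Z ^ 2 ≤ (Matrix.trace ((Φ * Z)ᴴ * ((Φ * Φᴴ)⁻¹ * (Φ * Z)))).re

/-- `θ` is an upper restricted isometry constant of order `t` for `A`:
`‖AZ‖_F² ≤ (1+θ)‖Z‖_F²` for every `t` row-sparse `Z`. -/
def IsUpperRIC {M N : ℕ} (L : ℕ) (A : Matrix (Fin M) (Fin N) ℂ) (t : ℕ) (θ : ℝ) : Prop :=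
  ∀ Z : Matrix (Fin N) (Fin L) ℂ, (rowSupp Z).card ≤ t →
    frobNorm (A * Z) ^ 2 ≤ (1 + θ) * frobNorm Z ^ 2

/-- The least-squares feedback of `X` on the index set `T`:
rows outside `T` are zero and on `T` it equals
`X_{(T)} + (Φ_T* Φ_T)⁻¹ Φ_T* Φ_{T^c} X_{(T^c)}`. -/
noncomputable def feedback {M N L : ℕ} (Φ : Matrix (Fin M) (Fin N) ℂ) (T : Finset (Fin N))
    (X : Matrix (Fin N) (Fin L) ℂ) : Matrix (Fin N) (Fin L) ℂ :=
  fun i j =>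
    if h : i ∈ T then
      (rowSub T X +
        ((colSub Φ T)ᴴ * colSub Φ T)⁻¹ * (colSub Φ T)ᴴ *
          (colSub Φ Tᶜ * rowSub Tᶜ X)) ⟨i, h⟩ j
    else 0

noncomputable def toE {N L : ℕ} (A : Matrix (Fin N) (Fin L) ℂ) :
    EuclideanSpace ℂ (Fin N × Fin L) := WithLp.toLp 2 (fun p => A p.1 p.2)

def toEv {ι : Type*} [Fintype ι] (v : ι → ℂ) : EuclideanSpace ℂ ι := WithLp.toLp 2 v

lemma frobNorm_eq {N L : ℕ} (A : Matrix (Fin N) (Fin L) ℂ) : frobNorm A = ‖toE A‖ := by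
  rw [EuclideanSpace.norm_eq, frobNorm]
  congr 1
  rw [Fintype.sum_prod_type]
  rfl

lemma vecNorm_eq {ι : Type*} [Fintype ι] (v : ι → ℂ) : vecNorm v = ‖toEv v‖ := by
  rw [EuclideanSpace.norm_eq, vecNorm]; rfl

lemma inner_toE {N L : ℕ} (A B : Matrix (Fin N) (Fin L) ℂ) :
    (inner ℂ (toE A) (toE B) : ℂ) = Matrix.trace (Aᴴ * B) := by
  simp only [inner, Matrix.trace, Matrix.diag, Matrix.mul_apply, Matrix.conjTranspose_apply]
  rw [Fintype.sum_prod_type]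
  rw [Finset.sum_comm]
  exact Finset.sum_congr rfl fun _ _ => Finset.sum_congr rfl fun _ _ => mul_comm _ _

lemma inner_toEv {ι : Type*} [Fintype ι] (v w : ι → ℂ) :
    (inner ℂ (toEv v) (toEv w) : ℂ) = ∑ i, (starRingEnd ℂ) (v i) * w i := by
  simp [inner, toEv]
  exact Finset.sum_congr rfl fun _ _ => mul_comm _ _

lemma frobNorm_nonneg {N L : ℕ} (A : Matrix (Fin N) (Fin L) ℂ) : 0 ≤ frobNorm A :=
  Real.sqrt_nonneg _

lemma vecNorm_nonneg {ι : Type*} [Fintype ι] (v : ι → ℂ) : 0 ≤ vecNorm v :=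
  Real.sqrt_nonneg _

lemma frobNorm_sq {N L : ℕ} (A : Matrix (Fin N) (Fin L) ℂ) :
    frobNorm A ^ 2 = ∑ i, ∑ j, ‖A i j‖ ^ 2 := by
  rw [frobNorm, Real.sq_sqrt]
  positivity

lemma vecNorm_sq {ι : Type*} [Fintype ι] (v : ι → ℂ) :
    vecNorm v ^ 2 = ∑ i, ‖v i‖ ^ 2 := by
  rw [vecNorm, Real.sq_sqrt]; positivity

lemma frobNorm_sq_rows {N L : ℕ} (A : Matrix (Fin N) (Fin L) ℂ) :
    frobNorm A ^ 2 = ∑ i, vecNorm (A i) ^ 2 := by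
  rw [frobNorm_sq]
  exact Finset.sum_congr rfl fun i _ => (vecNorm_sq (A i)).symm

lemma mem_rowSupp {N L : ℕ} {X : Matrix (Fin N) (Fin L) ℂ} {i : Fin N} :
    i ∈ rowSupp X ↔ X i ≠ 0 := by
  classical simp [rowSupp]

lemma rowSupp_zero_row {N L : ℕ} {X : Matrix (Fin N) (Fin L) ℂ} {i : Fin N}
    (h : i ∉ rowSupp X) (j : Fin L) : X i j = 0 := by
  have : X i = 0 := by
    by_contra hc
    exact h (mem_rowSupp.mpr hc)
  exact congrFun this j

lemma rowSupp_not_mem {N L : ℕ} {X : Matrix (Fin N) (Fin L) ℂ} {i : Fin N}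
    (h : i ∉ rowSupp X) : X i = 0 := by
  by_contra hc; exact h (mem_rowSupp.mpr hc)

lemma rowSupp_add {N L : ℕ} (A B : Matrix (Fin N) (Fin L) ℂ) :
    rowSupp (A + B) ⊆ rowSupp A ∪ rowSupp B := by
  intro i hi
  rw [mem_rowSupp] at hi
  rw [Finset.mem_union]
  by_contra h
  push_neg at h
  apply hi
  have h1 := rowSupp_not_mem h.1
  have h2 := rowSupp_not_mem h.2
  ext j
  simp [Matrix.add_apply, congrFun h1 j, congrFun h2 j]

lemma rowSupp_smul {N L : ℕ} (c : ℂ) (A : Matrix (Fin N) (Fin L) ℂ) :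
    rowSupp (c • A) ⊆ rowSupp A := by
  intro i hi
  rw [mem_rowSupp] at hi ⊢
  intro h
  apply hi
  ext j
  simp [Matrix.smul_apply, congrFun h j]

lemma rowSupp_neg {N L : ℕ} (A : Matrix (Fin N) (Fin L) ℂ) :
    rowSupp (-A) ⊆ rowSupp A := by
  intro i hi
  rw [mem_rowSupp] at hi ⊢
  intro h
  apply hi
  ext j
  simp [Matrix.neg_apply, congrFun h j]

lemma rowSupp_sub {N L : ℕ} (A B : Matrix (Fin N) (Fin L) ℂ) :
    rowSupp (A - B) ⊆ rowSupp A ∪ rowSupp B := by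
  rw [sub_eq_add_neg]
  intro i hi
  have := rowSupp_add A (-B) hi
  rw [Finset.mem_union] at this ⊢
  rcases this with h | h
  · exact Or.inl h
  · exact Or.inr (rowSupp_neg B h)

lemma rowSupp_rowRestrict {N L : ℕ} (T : Finset (Fin N)) (A : Matrix (Fin N) (Fin L) ℂ) :
    rowSupp (rowRestrict T A) ⊆ T := by
  intro i hi
  rw [mem_rowSupp] at hi
  by_contra h
  apply hi
  ext j
  simp [rowRestrict, h]

lemma rowRestrict_sub {N L : ℕ} (T : Finset (Fin N)) (A B : Matrix (Fin N) (Fin L) ℂ) :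
    rowRestrict T (A - B) = rowRestrict T A - rowRestrict T B := by
  ext i j
  simp only [rowRestrict, Matrix.sub_apply]
  split <;> simp

lemma rowRestrict_mul {N L : ℕ} (T : Finset (Fin N)) (A : Matrix (Fin N) (Fin L) ℂ)
    (R : Matrix (Fin L) (Fin L) ℂ) :
    rowRestrict T (A * R) = rowRestrict T A * R := by
  ext i j
  simp only [rowRestrict, Matrix.mul_apply]
  split
  next => rfl
  next => simp

lemma frobNorm_sq_rowRestrict {N L : ℕ} (T : Finset (Fin N)) (A : Matrix (Fin N) (Fin L) ℂ) :
    frobNorm (rowRestrict T A) ^ 2 = ∑ i ∈ T, vecNorm (A i) ^ 2 := by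
  classical
  rw [frobNorm_sq_rows]
  rw [← Finset.sum_filter_add_sum_filter_not Finset.univ (fun i => i ∈ T)]
  have h1 : ∑ i ∈ Finset.univ.filter (fun i => i ∈ T), vecNorm (rowRestrict T A i) ^ 2
      = ∑ i ∈ T, vecNorm (A i) ^ 2 := by
    rw [Finset.filter_mem_eq_inter, Finset.univ_inter]
    refine Finset.sum_congr rfl fun i hi => ?_
    have : rowRestrict T A i = A i := funext fun j => if_pos hi
    rw [this]
  have h2 : ∑ i ∈ Finset.univ.filter (fun i => ¬ i ∈ T), vecNorm (rowRestrict T A i) ^ 2 = 0 := by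
    refine Finset.sum_eq_zero fun i hi => ?_
    rw [Finset.mem_filter] at hi
    have : rowRestrict T A i = fun _ => (0:ℂ) := by funext j; simp [rowRestrict, hi.2]
    rw [this]
    simp [vecNorm_sq]
  rw [h1, h2, add_zero]

lemma vecNorm_eq_zero {ι : Type*} [Fintype ι] {v : ι → ℂ} : vecNorm v = 0 ↔ v = 0 := by
  rw [vecNorm_eq]
  rw [norm_eq_zero]
  exact ⟨fun h => congrArg WithLp.ofLp h, fun h => by rw [h]; rfl⟩

lemma vecNorm_smul {ι : Type*} [Fintype ι] (a : ℂ) (v : ι → ℂ) :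
    vecNorm (a • v) = ‖a‖ * vecNorm v := by
  rw [vecNorm_eq, vecNorm_eq]
  exact (norm_smul a (toEv v) : _)

lemma vecNorm_star {ι : Type*} [Fintype ι] (v : ι → ℂ) : vecNorm (star v) = vecNorm v := by
  unfold vecNorm
  congr 1
  exact Finset.sum_congr rfl fun i _ => by simp [Pi.star_apply]

lemma vecNorm_sq_eq_re {ι : Type*} [Fintype ι] (v : ι → ℂ) :
    vecNorm v ^ 2 = (∑ i, (starRingEnd ℂ) (v i) * v i).re := by
  rw [vecNorm_sq, Complex.re_sum]
  refine Finset.sum_congr rfl fun i _ => ?_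
  rw [Complex.conj_mul', ← Complex.ofReal_pow, Complex.ofReal_re]

lemma adj_identity {L : ℕ} (R : Matrix (Fin L) (Fin L) ℂ) (w v : Fin L → ℂ) :
    (∑ j, (starRingEnd ℂ) ((R.mulVec w) j) * v j)
      = ∑ k, (starRingEnd ℂ) (w k) * ((Rᴴ.mulVec v) k) := by
  simp only [Matrix.mulVec, dotProduct, Matrix.conjTranspose_apply, map_sum,
    _root_.map_mul, Finset.sum_mul, Finset.mul_sum, starRingEnd_apply]
  rw [Finset.sum_comm]
  refine Finset.sum_congr rfl fun j _ => Finset.sum_congr rfl fun k _ => by ring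

lemma re_sum_le {ι : Type*} [Fintype ι] (v w : ι → ℂ) :
    (∑ i, (starRingEnd ℂ) (v i) * w i).re ≤ vecNorm v * vecNorm w := by
  rw [vecNorm_eq, vecNorm_eq]
  have h := re_inner_le_norm (𝕜 := ℂ) (toEv v) (toEv w)
  rw [inner_toEv] at h
  exact h

lemma exists_unit_vec {L : ℕ} (hL : 0 < L) : ∃ v : Fin L → ℂ, vecNorm v = 1 := by
  refine ⟨(Pi.single (⟨0, hL⟩ : Fin L) (1:ℂ) : Fin L → ℂ), ?_⟩
  rw [vecNorm]
  have : ∑ i, ‖(Pi.single (⟨0, hL⟩ : Fin L) (1:ℂ) : Fin L → ℂ) i‖ ^ 2 = 1 := by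
    rw [Finset.sum_eq_single (⟨0, hL⟩ : Fin L)]
    · simp
    · intro b _ hb; rw [Pi.single_eq_of_ne hb]; simp
    · simp
  rw [this, Real.sqrt_one]

lemma sigmaSet_nonempty {L : ℕ} (hL : 0 < L) (R : Matrix (Fin L) (Fin L) ℂ) :
    (sigmaSet R).Nonempty := by
  obtain ⟨v, hv⟩ := exists_unit_vec hL
  exact ⟨vecNorm (R.mulVec v), v, hv, rfl⟩

lemma sigmaSet_nonneg {L : ℕ} {R : Matrix (Fin L) (Fin L) ℂ} {c : ℝ} (hc : c ∈ sigmaSet R) :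
    0 ≤ c := by
  obtain ⟨v, _, rfl⟩ := hc
  exact vecNorm_nonneg _

lemma sigmaSet_bddBelow {L : ℕ} (R : Matrix (Fin L) (Fin L) ℂ) : BddBelow (sigmaSet R) :=
  ⟨0, fun c hc => sigmaSet_nonneg hc⟩

lemma mulVec_le_frob {L : ℕ} (R : Matrix (Fin L) (Fin L) ℂ) (v : Fin L → ℂ) :
    vecNorm (R.mulVec v) ≤ frobNorm R * vecNorm v := by
  have hsq : vecNorm (R.mulVec v) ^ 2 ≤ (frobNorm R * vecNorm v) ^ 2 := by
    rw [vecNorm_sq, mul_pow, frobNorm_sq_rows, Finset.sum_mul]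
    refine Finset.sum_le_sum fun j _ => ?_
    have : (R.mulVec v) j = ∑ k, (starRingEnd ℂ) ((star (R j)) k) * v k := by
      simp [Matrix.mulVec, dotProduct, Pi.star_apply]
    rw [this]
    have h := norm_inner_le_norm (𝕜 := ℂ) (toEv (star (R j))) (toEv v)
    rw [inner_toEv] at h
    rw [← vecNorm_eq, ← vecNorm_eq, vecNorm_star] at h
    calc ‖∑ k, (starRingEnd ℂ) ((star (R j)) k) * v k‖ ^ 2
        ≤ (vecNorm (R j) * vecNorm v) ^ 2 := by
          apply pow_le_pow_left₀ (norm_nonneg _) h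
      _ = vecNorm (R j) ^ 2 * vecNorm v ^ 2 := by ring
  have h1 : 0 ≤ vecNorm (R.mulVec v) := vecNorm_nonneg _
  have h2 : 0 ≤ frobNorm R * vecNorm v := mul_nonneg (frobNorm_nonneg _) (vecNorm_nonneg _)
  nlinarith

lemma sigmaSet_bddAbove {L : ℕ} (R : Matrix (Fin L) (Fin L) ℂ) : BddAbove (sigmaSet R) := by
  refine ⟨frobNorm R, fun c hc => ?_⟩
  obtain ⟨v, hv, rfl⟩ := hc
  calc vecNorm (R.mulVec v) ≤ frobNorm R * vecNorm v := mulVec_le_frob R v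
    _ = frobNorm R := by rw [hv, mul_one]

lemma sigmaMax_nonneg {L : ℕ} (hL : 0 < L) (R : Matrix (Fin L) (Fin L) ℂ) :
    0 ≤ sigmaMax R := by
  obtain ⟨c, hc⟩ := sigmaSet_nonempty hL R
  exact le_trans (sigmaSet_nonneg hc) (le_csSup (sigmaSet_bddAbove R) hc)

lemma sigmaMin_nonneg {L : ℕ} (R : Matrix (Fin L) (Fin L) ℂ) (hne : (sigmaSet R).Nonempty) :
    0 ≤ sigmaMin R :=
  le_csInf hne fun c hc => sigmaSet_nonneg hc

lemma mulVec_le_sigmaMax {L : ℕ} (hL : 0 < L) (R : Matrix (Fin L) (Fin L) ℂ) (w : Fin L → ℂ) :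
    vecNorm (R.mulVec w) ≤ sigmaMax R * vecNorm w := by
  rcases eq_or_ne w 0 with rfl | hw
  · simp [Matrix.mulVec_zero, vecNorm_eq_zero.mpr rfl]
  · have hwn : 0 < vecNorm w := lt_of_le_of_ne (vecNorm_nonneg w) (fun h => hw (vecNorm_eq_zero.mp h.symm))
    set c := vecNorm w with hc
    set u : Fin L → ℂ := ((c⁻¹ : ℝ) : ℂ) • w with hu
    have hun : vecNorm u = 1 := by
      rw [hu, vecNorm_smul]
      simp only [Complex.norm_real, Real.norm_eq_abs]
      rw [abs_of_pos (inv_pos.mpr hwn)]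
      field_simp
      exact hc.symm
    have hmem : vecNorm (R.mulVec u) ∈ sigmaSet R := ⟨u, hun, rfl⟩
    have hle := le_csSup (sigmaSet_bddAbove R) hmem
    have hRu : vecNorm (R.mulVec u) = c⁻¹ * vecNorm (R.mulVec w) := by
      rw [hu, Matrix.mulVec_smul, vecNorm_smul]
      simp only [Complex.norm_real, Real.norm_eq_abs]
      rw [abs_of_pos (inv_pos.mpr hwn)]
    rw [hRu] at hle
    calc vecNorm (R.mulVec w) = c * (c⁻¹ * vecNorm (R.mulVec w)) := by field_simp
      _ ≤ c * sigmaMax R := by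
          apply mul_le_mul_of_nonneg_left hle (le_of_lt hwn)
      _ = sigmaMax R * c := mul_comm _ _

lemma sigmaMin_le_mulVec {L : ℕ} (R : Matrix (Fin L) (Fin L) ℂ) (w : Fin L → ℂ) :
    sigmaMin R * vecNorm w ≤ vecNorm (R.mulVec w) := by
  rcases eq_or_ne w 0 with rfl | hw
  · simp [Matrix.mulVec_zero, vecNorm_eq_zero.mpr rfl]
  · have hwn : 0 < vecNorm w := lt_of_le_of_ne (vecNorm_nonneg w) (fun h => hw (vecNorm_eq_zero.mp h.symm))
    set c := vecNorm w with hc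
    set u : Fin L → ℂ := ((c⁻¹ : ℝ) : ℂ) • w with hu
    have hun : vecNorm u = 1 := by
      rw [hu, vecNorm_smul]
      simp only [Complex.norm_real, Real.norm_eq_abs]
      rw [abs_of_pos (inv_pos.mpr hwn)]
      field_simp
      exact hc.symm
    have hmem : vecNorm (R.mulVec u) ∈ sigmaSet R := ⟨u, hun, rfl⟩
    have hle := csInf_le (sigmaSet_bddBelow R) hmem
    have hRu : vecNorm (R.mulVec u) = c⁻¹ * vecNorm (R.mulVec w) := by
      rw [hu, Matrix.mulVec_smul, vecNorm_smul]
      simp only [Complex.norm_real, Real.norm_eq_abs]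
      rw [abs_of_pos (inv_pos.mpr hwn)]
    rw [hRu] at hle
    have := mul_le_mul_of_nonneg_left hle (le_of_lt hwn)
    calc sigmaMin R * c = c * sigmaMin R := mul_comm _ _
      _ ≤ c * (c⁻¹ * vecNorm (R.mulVec w)) := this
      _ = vecNorm (R.mulVec w) := by field_simp

lemma sq_le_of_sq {a b : ℝ} (ha : 0 ≤ a) (hb : 0 ≤ b) (h : a ^ 2 ≤ b ^ 2) : a ≤ b := by
  nlinarith

lemma sigmaMax_conjTranspose_le {L : ℕ} (hL : 0 < L) (R : Matrix (Fin L) (Fin L) ℂ) :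
    sigmaMax Rᴴ ≤ sigmaMax R := by
  refine csSup_le (sigmaSet_nonempty hL Rᴴ) fun c hc => ?_
  obtain ⟨v, hv, rfl⟩ := hc
  set w := Rᴴ.mulVec v with hw
  have key : vecNorm w ^ 2 ≤ sigmaMax R * vecNorm w := by
    have h1 : vecNorm w ^ 2 = (∑ k, (starRingEnd ℂ) (w k) * (Rᴴ.mulVec v) k).re := by
      rw [vecNorm_sq_eq_re]
    rw [← adj_identity R w v] at h1
    have h2 : (∑ j, (starRingEnd ℂ) ((R.mulVec w) j) * v j).re
        ≤ vecNorm (R.mulVec w) * vecNorm v := re_sum_le _ _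
    rw [hv, mul_one] at h2
    have h3 : vecNorm (R.mulVec w) ≤ sigmaMax R * vecNorm w := mulVec_le_sigmaMax hL R w
    calc vecNorm w ^ 2 = _ := h1
      _ ≤ vecNorm (R.mulVec w) := h2
      _ ≤ sigmaMax R * vecNorm w := h3
  rcases eq_or_lt_of_le (vecNorm_nonneg w) with h0 | h0
  · rw [← h0]
    exact sigmaMax_nonneg hL R
  · nlinarith

lemma sigmaMin_le_conjTranspose {L : ℕ} (hL : 0 < L) {R : Matrix (Fin L) (Fin L) ℂ}
    (hR : IsUnit R) : sigmaMin R ≤ sigmaMin Rᴴ := by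
  refine le_csInf (sigmaSet_nonempty hL Rᴴ) fun c hc => ?_
  obtain ⟨v, hv, rfl⟩ := hc
  have hdet : IsUnit R.det := (Matrix.isUnit_iff_isUnit_det R).mp hR
  set w := R⁻¹.mulVec v with hw
  have hRw : R.mulVec w = v := by
    rw [hw, Matrix.mulVec_mulVec, Matrix.mul_nonsing_inv R hdet, Matrix.one_mulVec]
  have h1 : (1:ℝ) ≤ vecNorm w * vecNorm (Rᴴ.mulVec v) := by
    have : (∑ k, (starRingEnd ℂ) (w k) * (Rᴴ.mulVec v) k).re
        ≤ vecNorm w * vecNorm (Rᴴ.mulVec v) := re_sum_le _ _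
    rw [← adj_identity R w v, hRw] at this
    have hvv : (∑ j, (starRingEnd ℂ) (v j) * v j).re = 1 := by
      rw [← vecNorm_sq_eq_re, hv]; norm_num
    linarith [this, hvv.symm.le]
  have h2 : sigmaMin R * vecNorm w ≤ 1 := by
    have := sigmaMin_le_mulVec R w
    rw [hRw, hv] at this
    exact this
  have h0 : 0 ≤ sigmaMin R := sigmaMin_nonneg R (sigmaSet_nonempty hL R)
  calc sigmaMin R = sigmaMin R * 1 := (mul_one _).symm
    _ ≤ sigmaMin R * (vecNorm w * vecNorm (Rᴴ.mulVec v)) :=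
        mul_le_mul_of_nonneg_left h1 h0
    _ = (sigmaMin R * vecNorm w) * vecNorm (Rᴴ.mulVec v) := by ring
    _ ≤ 1 * vecNorm (Rᴴ.mulVec v) :=
        mul_le_mul_of_nonneg_right h2 (vecNorm_nonneg _)
    _ = vecNorm (Rᴴ.mulVec v) := one_mul _

lemma vecNorm_vecMul {L : ℕ} (R : Matrix (Fin L) (Fin L) ℂ) (w : Fin L → ℂ) :
    vecNorm (Matrix.vecMul w R) = vecNorm (Rᴴ.mulVec (star w)) := by
  unfold vecNorm
  congr 1
  refine Finset.sum_congr rfl fun j _ => ?_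
  have : (Rᴴ.mulVec (star w)) j = (starRingEnd ℂ) ((Matrix.vecMul w R) j) := by
    simp only [Matrix.mulVec, Matrix.vecMul, dotProduct, Matrix.conjTranspose_apply,
      Pi.star_apply, map_sum, _root_.map_mul, starRingEnd_apply]
    exact Finset.sum_congr rfl fun k _ => by ring
  rw [this]
  simp

lemma row_mul_eq_vecMul {N L : ℕ} (A : Matrix (Fin N) (Fin L) ℂ) (R : Matrix (Fin L) (Fin L) ℂ)
    (i : Fin N) : (A * R) i = Matrix.vecMul (A i) R := by
  funext j
  simp [Matrix.mul_apply, Matrix.vecMul, dotProduct]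

lemma frob_mul_le {N L : ℕ} (hL : 0 < L) (A : Matrix (Fin N) (Fin L) ℂ)
    (R : Matrix (Fin L) (Fin L) ℂ) :
    frobNorm (A * R) ≤ sigmaMax R * frobNorm A := by
  have hσ : 0 ≤ sigmaMax R := sigmaMax_nonneg hL R
  refine sq_le_of_sq (frobNorm_nonneg _) (mul_nonneg hσ (frobNorm_nonneg _)) ?_
  rw [mul_pow, frobNorm_sq_rows, frobNorm_sq_rows, Finset.mul_sum]
  refine Finset.sum_le_sum fun i _ => ?_
  rw [row_mul_eq_vecMul, vecNorm_vecMul]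
  have h1 : vecNorm (Rᴴ.mulVec (star (A i))) ≤ sigmaMax R * vecNorm (A i) := by
    calc vecNorm (Rᴴ.mulVec (star (A i))) ≤ sigmaMax Rᴴ * vecNorm (star (A i)) :=
          mulVec_le_sigmaMax hL Rᴴ _
      _ = sigmaMax Rᴴ * vecNorm (A i) := by rw [vecNorm_star]
      _ ≤ sigmaMax R * vecNorm (A i) :=
          mul_le_mul_of_nonneg_right (sigmaMax_conjTranspose_le hL R) (vecNorm_nonneg _)
  calc vecNorm (Rᴴ.mulVec (star (A i))) ^ 2 ≤ (sigmaMax R * vecNorm (A i)) ^ 2 :=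
        pow_le_pow_left₀ (vecNorm_nonneg _) h1 2
    _ = sigmaMax R ^ 2 * vecNorm (A i) ^ 2 := by ring

lemma frob_mul_ge {N L : ℕ} (hL : 0 < L) (A : Matrix (Fin N) (Fin L) ℂ)
    {R : Matrix (Fin L) (Fin L) ℂ} (hR : IsUnit R) :
    sigmaMin R * frobNorm A ≤ frobNorm (A * R) := by
  have hσ : 0 ≤ sigmaMin R := sigmaMin_nonneg R (sigmaSet_nonempty hL R)
  refine sq_le_of_sq (mul_nonneg hσ (frobNorm_nonneg _)) (frobNorm_nonneg _) ?_
  rw [mul_pow, frobNorm_sq_rows, frobNorm_sq_rows, Finset.mul_sum]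
  refine Finset.sum_le_sum fun i _ => ?_
  rw [row_mul_eq_vecMul, vecNorm_vecMul]
  have h1 : sigmaMin R * vecNorm (A i) ≤ vecNorm (Rᴴ.mulVec (star (A i))) := by
    calc sigmaMin R * vecNorm (A i) = sigmaMin R * vecNorm (star (A i)) := by rw [vecNorm_star]
      _ ≤ sigmaMin Rᴴ * vecNorm (star (A i)) :=
          mul_le_mul_of_nonneg_right (sigmaMin_le_conjTranspose hL hR) (vecNorm_nonneg _)
      _ ≤ vecNorm (Rᴴ.mulVec (star (A i))) := sigmaMin_le_mulVec Rᴴ _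
  calc sigmaMin R ^ 2 * vecNorm (A i) ^ 2 = (sigmaMin R * vecNorm (A i)) ^ 2 := by ring
    _ ≤ vecNorm (Rᴴ.mulVec (star (A i))) ^ 2 :=
        pow_le_pow_left₀ (mul_nonneg hσ (vecNorm_nonneg _)) h1 2

lemma toE_sub {N L : ℕ} (A B : Matrix (Fin N) (Fin L) ℂ) : toE (A - B) = toE A - toE B := rfl
lemma toE_add {N L : ℕ} (A B : Matrix (Fin N) (Fin L) ℂ) : toE (A + B) = toE A + toE B := rfl
lemma toE_smul {N L : ℕ} (c : ℂ) (A : Matrix (Fin N) (Fin L) ℂ) : toE (c • A) = c • toE A := rfl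

lemma frob_sq_eq_re_trace {N L : ℕ} (A : Matrix (Fin N) (Fin L) ℂ) :
    frobNorm A ^ 2 = (Matrix.trace (Aᴴ * A)).re := by
  rw [← inner_toE]
  rw [frobNorm_eq]
  have := @inner_self_eq_norm_sq ℂ _ _ _ _ (toE A)
  rw [← this]
  rfl

lemma re_trace_le {N L : ℕ} (A B : Matrix (Fin N) (Fin L) ℂ) :
    (Matrix.trace (Aᴴ * B)).re ≤ frobNorm A * frobNorm B := by
  rw [← inner_toE, frobNorm_eq, frobNorm_eq]
  exact re_inner_le_norm (𝕜 := ℂ) _ _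

lemma frob_sub_le {N L : ℕ} (A B : Matrix (Fin N) (Fin L) ℂ) :
    frobNorm (A - B) ≤ frobNorm A + frobNorm B := by
  rw [frobNorm_eq, frobNorm_eq, frobNorm_eq, toE_sub]
  exact norm_sub_le _ _

section Proj

variable {M N : ℕ} (Φ : Matrix (Fin M) (Fin N) ℂ) (hinv : IsUnit (Φ * Φᴴ))

lemma H_herm : ((Φ * Φᴴ)⁻¹)ᴴ = (Φ * Φᴴ)⁻¹ := by
  rw [Matrix.conjTranspose_nonsing_inv]
  congr 1
  rw [Matrix.conjTranspose_mul, Matrix.conjTranspose_conjTranspose]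

lemma P_idem (hinv : IsUnit (Φ * Φᴴ)) :
    (Φᴴ * (Φ * Φᴴ)⁻¹ * Φ) * (Φᴴ * (Φ * Φᴴ)⁻¹ * Φ) = Φᴴ * (Φ * Φᴴ)⁻¹ * Φ := by
  have hdet : IsUnit (Φ * Φᴴ).det := (Matrix.isUnit_iff_isUnit_det _).mp hinv
  have h : (Φ * Φᴴ)⁻¹ * (Φ * Φᴴ) = 1 := Matrix.nonsing_inv_mul _ hdet
  calc (Φᴴ * (Φ * Φᴴ)⁻¹ * Φ) * (Φᴴ * (Φ * Φᴴ)⁻¹ * Φ)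
      = Φᴴ * (((Φ * Φᴴ)⁻¹ * (Φ * Φᴴ)) * ((Φ * Φᴴ)⁻¹ * Φ)) := by
        simp only [Matrix.mul_assoc]
    _ = Φᴴ * (Φ * Φᴴ)⁻¹ * Φ := by rw [h, Matrix.one_mul, Matrix.mul_assoc]

lemma P_herm : (Φᴴ * (Φ * Φᴴ)⁻¹ * Φ)ᴴ = Φᴴ * (Φ * Φᴴ)⁻¹ * Φ := by
  rw [Matrix.conjTranspose_mul, Matrix.conjTranspose_mul, H_herm,
    Matrix.conjTranspose_conjTranspose]
  rw [Matrix.mul_assoc]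

end Proj

/-- PRIC tail bound: `‖A - P A‖² ≤ γ ‖A‖²` for sparse `A`. -/
lemma pric_tail {M N L s₀ : ℕ} {Φ : Matrix (Fin M) (Fin N) ℂ} (hinv : IsUnit (Φ * Φᴴ))
    {γ : ℝ} (hPRIC : IsPRIC L Φ s₀ γ) {A : Matrix (Fin N) (Fin L) ℂ}
    (hA : (rowSupp A).card ≤ s₀) :
    frobNorm (A - Φᴴ * (Φ * Φᴴ)⁻¹ * Φ * A) ^ 2 ≤ γ * frobNorm A ^ 2 := by
  set P := Φᴴ * (Φ * Φᴴ)⁻¹ * Φ with hP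
  have h := hPRIC A hA
  have htr1 : (Φ * A)ᴴ * ((Φ * Φᴴ)⁻¹ * (Φ * A)) = Aᴴ * (P * A) := by
    rw [Matrix.conjTranspose_mul, hP]
    simp only [Matrix.mul_assoc]
  have htr2 : Aᴴ * (P * A) = (P * A)ᴴ * (P * A) := by
    rw [Matrix.conjTranspose_mul, P_herm]
    calc Aᴴ * (P * A) = Aᴴ * ((P * P) * A) := by rw [P_idem Φ hinv]
      _ = Aᴴ * P * (P * A) := by simp only [Matrix.mul_assoc]
  rw [htr1, htr2, ← frob_sq_eq_re_trace] at h
  -- now h : (1 - γ) * ‖A‖² ≤ ‖P A‖²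
  have hdot : (Matrix.trace (Aᴴ * (P * A))).re = frobNorm (P * A) ^ 2 := by
    rw [htr2, ← frob_sq_eq_re_trace]
  have hexp : frobNorm (A - P * A) ^ 2
      = frobNorm A ^ 2 - 2 * (Matrix.trace (Aᴴ * (P * A))).re + frobNorm (P * A) ^ 2 := by
    rw [frobNorm_eq, toE_sub, frobNorm_eq, frobNorm_eq]
    have hre : (Matrix.trace (Aᴴ * (P * A))).re
        = RCLike.re (inner ℂ (toE A) (toE (P * A)) : ℂ) := by
      rw [inner_toE]; rfl
    rw [hre]
    exact norm_sub_sq (𝕜 := ℂ) _ _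
  rw [hexp, hdot]
  nlinarith [h]

/-- Self-adjointness of `I - P` as a trace identity. -/
lemma trace_G {M N L : ℕ} (Φ : Matrix (Fin M) (Fin N) ℂ) (hinv : IsUnit (Φ * Φᴴ))
    (A B : Matrix (Fin N) (Fin L) ℂ) :
    (A - Φᴴ * (Φ * Φᴴ)⁻¹ * Φ * A)ᴴ * (B - Φᴴ * (Φ * Φᴴ)⁻¹ * Φ * B)
      = Aᴴ * (B - Φᴴ * (Φ * Φᴴ)⁻¹ * Φ * B) := by
  set P := Φᴴ * (Φ * Φᴴ)⁻¹ * Φ with hP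
  have hzero : P * (B - P * B) = 0 := by
    rw [Matrix.mul_sub, ← Matrix.mul_assoc, P_idem Φ hinv, sub_self]
  have h2 : (P * A)ᴴ * (B - P * B) = 0 := by
    rw [Matrix.conjTranspose_mul, P_herm, Matrix.mul_assoc, hzero, Matrix.mul_zero]
  rw [Matrix.conjTranspose_sub, Matrix.sub_mul, h2, sub_zero]

lemma frobNorm_smul {N L : ℕ} (a : ℂ) (A : Matrix (Fin N) (Fin L) ℂ) :
    frobNorm (a • A) = ‖a‖ * frobNorm A := by
  rw [frobNorm_eq, frobNorm_eq, toE_smul]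
  exact norm_smul a (toE A)

lemma frobNorm_eq_zero {N L : ℕ} {A : Matrix (Fin N) (Fin L) ℂ} :
    frobNorm A = 0 ↔ A = 0 := by
  rw [frobNorm_eq, norm_eq_zero]
  constructor
  · intro h; ext i j; exact congrFun (congrArg WithLp.ofLp h) (i, j)
  · rintro rfl; ext p; rfl

lemma frobNorm_zero {N L : ℕ} : frobNorm (0 : Matrix (Fin N) (Fin L) ℂ) = 0 :=
  frobNorm_eq_zero.mpr rfl

set_option maxHeartbeats 1000000 in
/-- Cross-term bound from the preconditioned RIP via polarization. -/
lemma pric_cross {M N L s₀ : ℕ} {Φ : Matrix (Fin M) (Fin N) ℂ} (hinv : IsUnit (Φ * Φᴴ))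
    {γ : ℝ} (hγ : 0 ≤ γ) (hPRIC : IsPRIC L Φ s₀ γ)
    (Z V : Matrix (Fin N) (Fin L) ℂ)
    (hsupp : (rowSupp Z ∪ rowSupp V).card ≤ s₀) :
    -(Matrix.trace (Zᴴ * (V - Φᴴ * (Φ * Φᴴ)⁻¹ * Φ * V))).re
      ≤ γ * frobNorm Z * frobNorm V := by
  by_cases hZ : Z = 0
  · subst hZ
    rw [Matrix.conjTranspose_zero, Matrix.zero_mul, Matrix.trace_zero]
    rw [frobNorm_zero]
    simp
  by_cases hV : V = 0
  · subst hV
    rw [Matrix.mul_zero, sub_zero, Matrix.mul_zero, Matrix.trace_zero]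
    rw [frobNorm_zero]
    simp
  have hdpos : 0 < frobNorm Z :=
    lt_of_le_of_ne (frobNorm_nonneg Z) (fun h => hZ (frobNorm_eq_zero.mp h.symm))
  have hcpos : 0 < frobNorm V :=
    lt_of_le_of_ne (frobNorm_nonneg V) (fun h => hV (frobNorm_eq_zero.mp h.symm))
  set P := Φᴴ * (Φ * Φᴴ)⁻¹ * Φ with hP
  set d := frobNorm Z with hd
  set c := frobNorm V with hc
  set Ap := ((c:ℂ)) • Z + ((d:ℂ)) • V with hAp
  set Am := ((c:ℂ)) • Z - ((d:ℂ)) • V with hAm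
  have hsuppAp : (rowSupp Ap).card ≤ s₀ := by
    refine le_trans (Finset.card_le_card ?_) hsupp
    refine subset_trans (rowSupp_add _ _) ?_
    exact Finset.union_subset_union (rowSupp_smul _ _) (rowSupp_smul _ _)
  have hsuppAm : (rowSupp Am).card ≤ s₀ := by
    refine le_trans (Finset.card_le_card ?_) hsupp
    refine subset_trans (rowSupp_sub _ _) ?_
    exact Finset.union_subset_union (rowSupp_smul _ _) (rowSupp_smul _ _)
  have hm := pric_tail hinv hPRIC hsuppAm
  have hp := pric_tail hinv hPRIC hsuppAp
  set x := toE (Z - P * Z) with hx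
  set y := toE (V - P * V) with hy
  set z := toE Z with hz
  set v := toE V with hv
  have hGm : toE (Am - P * Am) = (c:ℂ) • x - (d:ℂ) • y := by
    rw [hAm]
    have h1 : ((c:ℂ)) • Z - ((d:ℂ)) • V - P * (((c:ℂ)) • Z - ((d:ℂ)) • V)
        = (c:ℂ) • (Z - P * Z) - (d:ℂ) • (V - P * V) := by
      rw [Matrix.mul_sub, Matrix.mul_smul, Matrix.mul_smul, smul_sub, smul_sub]
      abel
    rw [h1, toE_sub, toE_smul, toE_smul]
  have hGp : toE (Ap - P * Ap) = (c:ℂ) • x + (d:ℂ) • y := by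
    rw [hAp]
    have h1 : ((c:ℂ)) • Z + ((d:ℂ)) • V - P * (((c:ℂ)) • Z + ((d:ℂ)) • V)
        = (c:ℂ) • (Z - P * Z) + (d:ℂ) • (V - P * V) := by
      rw [Matrix.mul_add, Matrix.mul_smul, Matrix.mul_smul, smul_sub, smul_sub]
      abel
    rw [h1, toE_add, toE_smul, toE_smul]
  have htarget : (Matrix.trace (Zᴴ * (V - P * V))).re = RCLike.re (inner ℂ x y : ℂ) := by
    rw [hx, hy, inner_toE, ← trace_G Φ hinv Z V]
    rfl
  have hnz : ‖z‖ = d := by rw [hz, ← frobNorm_eq, hd]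
  have hnv : ‖v‖ = c := by rw [hv, ← frobNorm_eq, hc]
  have hinner_smul : ∀ (u w : EuclideanSpace ℂ (Fin N × Fin L)),
      RCLike.re (inner ℂ ((c:ℂ) • u) ((d:ℂ) • w) : ℂ) = (c*d) * RCLike.re (inner ℂ u w : ℂ) := by
    intro u w
    rw [inner_smul_left, inner_smul_right, Complex.conj_ofReal]
    calc RCLike.re ((c:ℂ) * ((d:ℂ) * inner ℂ u w))
        = (((c*d : ℝ) : ℂ) * inner ℂ u w).re := by
          rw [← mul_assoc, ← Complex.ofReal_mul]; rfl
      _ = (c*d) * (inner ℂ u w : ℂ).re := Complex.re_ofReal_mul _ _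
      _ = (c*d) * RCLike.re (inner ℂ u w : ℂ) := rfl
  have hAmnorm : frobNorm Am ^ 2
      = c^2*d^2 - 2*(c*d)*RCLike.re (inner ℂ z v : ℂ) + d^2*c^2 := by
    rw [frobNorm_eq, hAm, toE_sub, toE_smul, toE_smul]
    rw [norm_sub_sq (𝕜 := ℂ), norm_smul, norm_smul, hinner_smul z v]
    simp only [Complex.norm_real, Real.norm_eq_abs, abs_of_pos hcpos, abs_of_pos hdpos,
      hnz, hnv]
    rw [← hz, ← hv, hnz, hnv]
    ring
  have hre_zv : -(c*d) ≤ RCLike.re (inner ℂ z v : ℂ) := by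
    have h1 := re_inner_le_norm (𝕜 := ℂ) z (-v)
    rw [inner_neg_right, map_neg, norm_neg, hnz, hnv] at h1
    linarith
  have hGm_exp : ‖(c:ℂ) • x - (d:ℂ) • y‖ ^ 2
      = (c*‖x‖)^2 - 2*(c*d)*RCLike.re (inner ℂ x y : ℂ) + (d*‖y‖)^2 := by
    rw [norm_sub_sq (𝕜 := ℂ), norm_smul, norm_smul, hinner_smul x y]
    simp only [Complex.norm_real, Real.norm_eq_abs, abs_of_pos hcpos, abs_of_pos hdpos]
    ring
  have hGp_exp : ‖(c:ℂ) • x + (d:ℂ) • y‖ ^ 2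
      = (c*‖x‖)^2 + 2*(c*d)*RCLike.re (inner ℂ x y : ℂ) + (d*‖y‖)^2 := by
    rw [norm_add_sq (𝕜 := ℂ), norm_smul, norm_smul, hinner_smul x y]
    simp only [Complex.norm_real, Real.norm_eq_abs, abs_of_pos hcpos, abs_of_pos hdpos]
    ring
  have hm' : frobNorm (Am - P * Am) ^ 2 ≤ γ * frobNorm Am ^ 2 := hm
  rw [frobNorm_eq, hGm, hGm_exp, hAmnorm] at hm'
  have hp0 : (0:ℝ) ≤ (c*‖x‖)^2 + 2*(c*d)*RCLike.re (inner ℂ x y : ℂ) + (d*‖y‖)^2 := by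
    rw [← hGp_exp]
    positivity
  rw [htarget]
  have hcd : 0 < c * d := mul_pos hcpos hdpos
  have H3 : (0:ℝ) ≤ γ * (c*d) * (RCLike.re (inner ℂ z v : ℂ) + c*d) :=
    mul_nonneg (mul_nonneg hγ hcd.le) (by linarith)
  have key : (-(RCLike.re (inner ℂ x y : ℂ))) * (4*(c*d)) ≤ (γ * d * c) * (4*(c*d)) := by
    nlinarith [hm', hp0, H3]
  have h4 : (0:ℝ) < 4*(c*d) := by linarith
  exact le_of_mul_le_mul_right key h4

lemma uric_cross {M N L t₀ : ℕ} {Φ : Matrix (Fin M) (Fin N) ℂ}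
    {θ : ℝ} (hθ : 0 ≤ θ) (hURIC : IsUpperRIC L ((Φ * Φᴴ)⁻¹ * Φ) t₀ θ)
    (Z : Matrix (Fin N) (Fin L) ℂ) (E : Matrix (Fin M) (Fin L) ℂ)
    (hsupp : (rowSupp Z).card ≤ t₀) :
    (Matrix.trace (Zᴴ * (Φᴴ * ((Φ * Φᴴ)⁻¹ * E)))).re
      ≤ Real.sqrt (1 + θ) * frobNorm Z * frobNorm E := by
  have hid : Zᴴ * (Φᴴ * ((Φ * Φᴴ)⁻¹ * E)) = (((Φ * Φᴴ)⁻¹ * Φ) * Z)ᴴ * E := by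
    rw [Matrix.conjTranspose_mul, Matrix.conjTranspose_mul, H_herm]
    simp only [Matrix.mul_assoc]
  rw [hid]
  have h1 := re_trace_le (((Φ * Φᴴ)⁻¹ * Φ) * Z) E
  have h2 : frobNorm (((Φ * Φᴴ)⁻¹ * Φ) * Z) ≤ Real.sqrt (1 + θ) * frobNorm Z := by
    refine sq_le_of_sq (frobNorm_nonneg _)
      (mul_nonneg (Real.sqrt_nonneg _) (frobNorm_nonneg _)) ?_
    have h3 := hURIC Z hsupp
    rw [mul_pow, Real.sq_sqrt (by linarith : (0:ℝ) ≤ 1 + θ)]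
    exact h3
  calc (Matrix.trace ((((Φ * Φᴴ)⁻¹ * Φ) * Z)ᴴ * E)).re
      ≤ frobNorm (((Φ * Φᴴ)⁻¹ * Φ) * Z) * frobNorm E := h1
    _ ≤ (Real.sqrt (1 + θ) * frobNorm Z) * frobNorm E :=
        mul_le_mul_of_nonneg_right h2 (frobNorm_nonneg _)
    _ = Real.sqrt (1 + θ) * frobNorm Z * frobNorm E := by ring

lemma rowRestrict_add {N L : ℕ} (T : Finset (Fin N)) (A B : Matrix (Fin N) (Fin L) ℂ) :
    rowRestrict T (A + B) = rowRestrict T A + rowRestrict T B := by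
  ext i j
  simp only [rowRestrict, Matrix.add_apply]
  split <;> simp

lemma restrict_trace_eq {N L : ℕ} (U : Finset (Fin N)) (D : Matrix (Fin N) (Fin L) ℂ) :
    (rowRestrict U D)ᴴ * D = (rowRestrict U D)ᴴ * rowRestrict U D := by
  ext j j'
  simp only [Matrix.mul_apply, Matrix.conjTranspose_apply]
  refine Finset.sum_congr rfl fun i _ => ?_
  by_cases h : i ∈ U
  · simp [rowRestrict, h]
  · simp [rowRestrict, h]

lemma frob_sq_restrict_self {N L : ℕ} (U : Finset (Fin N)) (D : Matrix (Fin N) (Fin L) ℂ) :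
    (Matrix.trace ((rowRestrict U D)ᴴ * D)).re = frobNorm (rowRestrict U D) ^ 2 := by
  rw [restrict_trace_eq, ← frob_sq_eq_re_trace]

lemma sum_le_sqrt2 {a b : ℝ} (ha : 0 ≤ a) (hb : 0 ≤ b) :
    a + b ≤ Real.sqrt 2 * Real.sqrt (a ^ 2 + b ^ 2) := by
  have h1 : Real.sqrt 2 * Real.sqrt (a ^ 2 + b ^ 2) = Real.sqrt (2 * (a ^ 2 + b ^ 2)) := by
    rw [← Real.sqrt_mul (by norm_num : (0:ℝ) ≤ 2)]
  rw [h1]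
  have h2 : a + b = Real.sqrt ((a + b) ^ 2) := by
    rw [Real.sqrt_sq (by linarith)]
  rw [h2]
  apply Real.sqrt_le_sqrt
  nlinarith [sq_nonneg (a - b)]

set_option maxHeartbeats 1000000 in

set_option maxHeartbeats 1000000 in
/-- Lemma 7 of the paper (tail bound after index selection). -/
theorem stmt7 {M N L s s' t : ℕ} (Φ : Matrix (Fin M) (Fin N) ℂ) (hinv : IsUnit (Φ * Φᴴ))
    (X W' : Matrix (Fin N) (Fin L) ℂ) (E : Matrix (Fin M) (Fin L) ℂ)
    (Y : Matrix (Fin M) (Fin L) ℂ) (hY : Y = Φ * X + E)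
    (hXs : (rowSupp X).card ≤ s) (hWs : (rowSupp W').card ≤ s')
    (Xt : Matrix (Fin N) (Fin L) ℂ) (hXt : Xt = W' + Φᴴ * ((Φ * Φᴴ)⁻¹ * (Y - Φ * W')))
    (Q : Matrix (Fin N) (Fin L) ℂ) (R : Matrix (Fin L) (Fin L) ℂ)
    (hQ : Qᴴ * Q = 1) (hR : IsUnit R) (hQR : Xt = Q * R)
    (α : ℝ) (hα : 1 ≤ α) (hσ : sigmaMax R ≤ α * sigmaMin R)
    (T : Finset (Fin N)) (hTcard : T.card = t) (hts : s ≤ t)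
    (hT : ∀ i ∈ T, ∀ j ∉ T, vecNorm (Q j) ≤ vecNorm (Q i))
    (γ θ : ℝ) (hγ : 0 ≤ γ) (hθ : 0 ≤ θ)
    (hPRIC : IsPRIC L Φ (s + s' + t) γ)
    (hURIC : IsUpperRIC L ((Φ * Φᴴ)⁻¹ * Φ) (t + s) θ) :
    frobNorm (rowRestrict Tᶜ X) ≤
      Real.sqrt 2 * α * (γ * frobNorm (X - W') + Real.sqrt (1 + θ) * frobNorm E) := by
  rcases Nat.eq_zero_or_pos L with hL0 | hL
  · subst hL0
    have hzero : ∀ (n : ℕ) (A : Matrix (Fin n) (Fin 0) ℂ), frobNorm A = 0 := by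
      intro n A; simp [frobNorm]
    rw [hzero N (rowRestrict Tᶜ X), hzero N (X - W'), hzero M E]
    simp
  -- setup
  set V := X - W' with hV
  set D := Xt - X with hDdef
  have hD : D = Φᴴ * ((Φ * Φᴴ)⁻¹ * E) - (V - Φᴴ * (Φ * Φᴴ)⁻¹ * Φ * V) := by
    rw [hDdef, hXt, hY, hV]
    simp only [Matrix.mul_sub, Matrix.mul_add, Matrix.mul_assoc]
    abel
  set S := rowSupp X with hS
  set K := S \ T with hK
  have hKcard_le : K.card ≤ (T \ S).card := by
    have h1 : (S \ T).card + (S ∩ T).card = S.card := Finset.card_sdiff_add_card_inter S T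
    have h2 : (T \ S).card + (T ∩ S).card = T.card := Finset.card_sdiff_add_card_inter T S
    have h3 : (S ∩ T).card = (T ∩ S).card := by rw [Finset.inter_comm]
    have hXs' : S.card ≤ s := hXs
    have hKeq : K.card = (S \ T).card := by rw [hK]
    omega
  obtain ⟨T', hT'sub, hT'card⟩ := Finset.exists_subset_card_eq hKcard_le
  have hT'T : T' ⊆ T := hT'sub.trans Finset.sdiff_subset
  have hdisj : Disjoint T' K := by
    rw [Finset.disjoint_left]
    intro i hiT' hiK
    exact (Finset.mem_sdiff.mp hiK).2 (hT'T hiT')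
  set U := T' ∪ K with hU
  set Z := rowRestrict U D with hZdef
  -- support cardinalities
  have hKS : K ⊆ S := Finset.sdiff_subset
  have hKs : K.card ≤ s := le_trans (Finset.card_le_card hKS) hXs
  have hT's : T'.card ≤ s := by rw [hT'card]; exact hKs
  have hUcard : U.card ≤ t + s := by
    have h1 : U.card ≤ T'.card + K.card := by rw [hU]; exact Finset.card_union_le T' K
    omega
  have hZsupp : (rowSupp Z).card ≤ t + s :=
    le_trans (Finset.card_le_card (rowSupp_rowRestrict U D)) hUcard
  have hZV : (rowSupp Z ∪ rowSupp V).card ≤ s + s' + t := by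
    have hZsub : rowSupp Z ⊆ (T \ S) ∪ S := by
      refine (rowSupp_rowRestrict U D).trans ?_
      rw [hU]
      exact Finset.union_subset (hT'sub.trans Finset.subset_union_left)
        (hKS.trans Finset.subset_union_right)
    have hVsub : rowSupp V ⊆ S ∪ rowSupp W' := by
      rw [hV, hS]; exact rowSupp_sub X W'
    have hsub : rowSupp Z ∪ rowSupp V ⊆ ((T \ S) ∪ S) ∪ rowSupp W' := by
      refine Finset.union_subset (hZsub.trans Finset.subset_union_left) ?_
      refine hVsub.trans ?_
      exact Finset.union_subset_union Finset.subset_union_right (subset_refl _)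
    have hc1 : (((T \ S) ∪ S) ∪ rowSupp W').card ≤ (T \ S).card + S.card + s' := by
      calc (((T \ S) ∪ S) ∪ rowSupp W').card
          ≤ ((T \ S) ∪ S).card + (rowSupp W').card := Finset.card_union_le _ _
        _ ≤ ((T \ S).card + S.card) + (rowSupp W').card := by
            have := Finset.card_union_le (T \ S) S; omega
        _ ≤ (T \ S).card + S.card + s' := by omega
    have hc2 : (T \ S).card ≤ t := by
      rw [← hTcard]; exact Finset.card_le_card Finset.sdiff_subset
    have hc3 : S.card ≤ s := hXs
    have := Finset.card_le_card hsub
    omega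
  -- bound on Z
  have hZbound : frobNorm Z ≤ γ * frobNorm V + Real.sqrt (1 + θ) * frobNorm E := by
    have hsq : frobNorm Z ^ 2
        ≤ (γ * frobNorm V + Real.sqrt (1 + θ) * frobNorm E) * frobNorm Z := by
      have e1 : frobNorm Z ^ 2 = (Matrix.trace (Zᴴ * D)).re := (frob_sq_restrict_self U D).symm
      rw [e1, hD, Matrix.mul_sub, Matrix.trace_sub, Complex.sub_re]
      have h1 := uric_cross hθ hURIC Z E hZsupp
      have h2 := pric_cross hinv hγ hPRIC Z V hZV
      nlinarith [h1, h2]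
    rcases eq_or_lt_of_le (frobNorm_nonneg Z) with h0 | h0
    · rw [← h0]
      have p1 : 0 ≤ γ * frobNorm V := mul_nonneg hγ (frobNorm_nonneg V)
      have p2 : 0 ≤ Real.sqrt (1 + θ) * frobNorm E :=
        mul_nonneg (Real.sqrt_nonneg _) (frobNorm_nonneg E)
      linarith
    · nlinarith [hsq, h0]
  -- geometry
  have hXK : rowRestrict Tᶜ X = rowRestrict K X := by
    ext i j
    simp only [rowRestrict]
    by_cases hiT : i ∈ T
    · have h1 : i ∉ Tᶜ := by simp [hiT]
      have h2 : i ∉ K := fun hk => (Finset.mem_sdiff.mp hk).2 hiT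
      simp [h1, h2]
    · have h1 : i ∈ Tᶜ := Finset.mem_compl.mpr hiT
      by_cases hiS : i ∈ S
      · have h2 : i ∈ K := Finset.mem_sdiff.mpr ⟨hiS, hiT⟩
        simp [h1, h2]
      · have hX0 : X i j = 0 := rowSupp_zero_row (by rw [← hS]; exact hiS) j
        have h2 : i ∉ K := fun hk => hiS (Finset.mem_sdiff.mp hk).1
        simp [h1, h2, hX0]
  have hXT' : rowRestrict T' X = 0 := by
    ext i j
    simp only [rowRestrict, Matrix.zero_apply]
    by_cases h : i ∈ T'
    · have hiS : i ∉ S := (Finset.mem_sdiff.mp (hT'sub h)).2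
      simp [h, rowSupp_zero_row (by rw [← hS]; exact hiS) j]
    · simp [h]
  set a := frobNorm (rowRestrict T' D) with ha
  set b := frobNorm (rowRestrict K D) with hb
  have hKXt : frobNorm (rowRestrict K X) ≤ frobNorm (rowRestrict K Xt) + b := by
    have hsplit : rowRestrict K X = rowRestrict K Xt - rowRestrict K D := by
      have hXeq : X = Xt - D := by rw [hDdef]; abel
      conv_lhs => rw [hXeq]
      exact rowRestrict_sub K Xt D
    rw [hsplit, hb]
    exact frob_sub_le _ _
  have hQcompare : frobNorm (rowRestrict K Q) ≤ frobNorm (rowRestrict T' Q) := by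
    refine sq_le_of_sq (frobNorm_nonneg _) (frobNorm_nonneg _) ?_
    rw [frobNorm_sq_rowRestrict, frobNorm_sq_rowRestrict]
    classical
    let e := Finset.equivOfCardEq (show K.card = T'.card from hT'card.symm)
    calc ∑ i ∈ K, vecNorm (Q i) ^ 2
        = ∑ x : {x // x ∈ K}, vecNorm (Q x.1) ^ 2 := (Finset.sum_coe_sort K (fun i => vecNorm (Q i) ^ 2)).symm
      _ ≤ ∑ x : {x // x ∈ K}, vecNorm (Q (e x).1) ^ 2 := by
          refine Finset.sum_le_sum fun x _ => ?_
          refine pow_le_pow_left₀ (vecNorm_nonneg _) ?_ 2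
          exact hT (e x).1 (hT'T (e x).2) x.1 (Finset.mem_sdiff.mp x.2).2
      _ = ∑ y : {x // x ∈ T'}, vecNorm (Q y.1) ^ 2 := Equiv.sum_comp e (fun y => vecNorm (Q y.1) ^ 2)
      _ = ∑ i ∈ T', vecNorm (Q i) ^ 2 := Finset.sum_coe_sort T' (fun i => vecNorm (Q i) ^ 2)
  have hT'D : rowRestrict T' Xt = rowRestrict T' D := by
    rw [hDdef, rowRestrict_sub, hXT', sub_zero]
  have hQstep : frobNorm (rowRestrict K Xt) ≤ α * a := by
    have e1 : rowRestrict K Xt = rowRestrict K Q * R := by rw [hQR, rowRestrict_mul]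
    have e2 : rowRestrict T' Xt = rowRestrict T' Q * R := by rw [hQR, rowRestrict_mul]
    calc frobNorm (rowRestrict K Xt) = frobNorm (rowRestrict K Q * R) := by rw [e1]
      _ ≤ sigmaMax R * frobNorm (rowRestrict K Q) := frob_mul_le hL _ R
      _ ≤ sigmaMax R * frobNorm (rowRestrict T' Q) :=
          mul_le_mul_of_nonneg_left hQcompare (sigmaMax_nonneg hL R)
      _ ≤ (α * sigmaMin R) * frobNorm (rowRestrict T' Q) :=
          mul_le_mul_of_nonneg_right hσ (frobNorm_nonneg _)
      _ = α * (sigmaMin R * frobNorm (rowRestrict T' Q)) := by ring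
      _ ≤ α * frobNorm (rowRestrict T' Q * R) :=
          mul_le_mul_of_nonneg_left (frob_mul_ge hL _ hR) (by linarith)
      _ = α * frobNorm (rowRestrict T' Xt) := by rw [e2]
      _ = α * a := by rw [hT'D, ha]
  have hfrobZsq : frobNorm Z ^ 2 = a ^ 2 + b ^ 2 := by
    rw [hZdef, frobNorm_sq_rowRestrict, hU, Finset.sum_union hdisj, ha, hb,
      frobNorm_sq_rowRestrict, frobNorm_sq_rowRestrict]
  have hab : a + b ≤ Real.sqrt 2 * frobNorm Z := by
    have h1 := sum_le_sqrt2 (frobNorm_nonneg (rowRestrict T' D)) (frobNorm_nonneg (rowRestrict K D))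
    rw [← ha, ← hb] at h1
    have h2 : Real.sqrt (a ^ 2 + b ^ 2) = frobNorm Z := by
      rw [← hfrobZsq, Real.sqrt_sq (frobNorm_nonneg Z)]
    rw [h2] at h1
    exact h1
  have hanneg : 0 ≤ a := frobNorm_nonneg _
  have hbnneg : 0 ≤ b := frobNorm_nonneg _
  calc frobNorm (rowRestrict Tᶜ X) = frobNorm (rowRestrict K X) := by rw [hXK]
    _ ≤ frobNorm (rowRestrict K Xt) + b := hKXt
    _ ≤ α * a + b := by linarith [hQstep]
    _ ≤ α * a + α * b := by nlinarith [hα, hbnneg]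
    _ = α * (a + b) := by ring
    _ ≤ α * (Real.sqrt 2 * frobNorm Z) := mul_le_mul_of_nonneg_left hab (by linarith)
    _ ≤ α * (Real.sqrt 2 * (γ * frobNorm V + Real.sqrt (1 + θ) * frobNorm E)) := by
        refine mul_le_mul_of_nonneg_left ?_ (by linarith)
        exact mul_le_mul_of_nonneg_left hZbound (Real.sqrt_nonneg 2)
    _ = Real.sqrt 2 * α * (γ * frobNorm V + Real.sqrt (1 + θ) * frobNorm E) := by ring
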